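/- For every odd prime p, the Baer subgroup of the Heisenberg group H_p, namely the intersection ⋂_K N_{H_p}(K) of the normalizers of all subgroups K of H_p, equals ζ(H_p). -/

import Mathlib

@[ext]
structure Heis (p : ℕ) where
  x : ZMod p
  y : ZMod p
  z : ZMod p

namespace Heis

variable {p : ℕ}

instance : Mul (Heis p) := ⟨fun a b => ⟨a.x + b.x, a.y + b.y, a.z + b.z + a.x * b.y⟩⟩
instance : One (Heis p) := ⟨⟨0, 0, 0⟩⟩
instance : Inv (Heis p) := ⟨fun a => ⟨-a.x, -a.y, a.x * a.y - a.z⟩⟩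

lemma mul_def (a b : Heis p) :
    a * b = ⟨a.x + b.x, a.y + b.y, a.z + b.z + a.x * b.y⟩ := rfl
lemma one_def : (1 : Heis p) = ⟨0, 0, 0⟩ := rfl
lemma inv_def (a : Heis p) : a⁻¹ = ⟨-a.x, -a.y, a.x * a.y - a.z⟩ := rfl

instance instGroup : Group (Heis p) where
  mul_assoc a b c := by ext <;> simp [mul_def] <;> ring
  one_mul a := by ext <;> simp [mul_def, one_def]
  mul_one a := by ext <;> simp [mul_def, one_def]
  inv_mul_cancel a := by ext <;> simp [mul_def, inv_def, one_def]

end Heis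

/-- The centre subgroup ζ(H_p) = {(0,0,z)}. -/
def Zeta (p : ℕ) : Subgroup (Heis p) where
  carrier := {g | g.x = 0 ∧ g.y = 0}
  one_mem' := ⟨rfl, rfl⟩
  mul_mem' := by
    rintro a b ⟨ha1, ha2⟩ ⟨hb1, hb2⟩
    exact ⟨by simp [Heis.mul_def, ha1, hb1], by simp [Heis.mul_def, ha2, hb2]⟩
  inv_mem' := by
    rintro a ⟨h1, h2⟩
    exact ⟨by simp [Heis.inv_def, h1], by simp [Heis.inv_def, h2]⟩


namespace HeisAux

variable {p : ℕ}

lemma pow_e1 (n : ℕ) : (⟨1,0,0⟩ : Heis p) ^ n = ⟨(n : ZMod p), 0, 0⟩ := by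
  induction n with
  | zero => simp [Heis.one_def]
  | succ k ih => ext <;> simp [pow_succ, ih, Heis.mul_def] <;> push_cast <;> ring

lemma zpow_e1 (n : ℤ) : (⟨1,0,0⟩ : Heis p) ^ n = ⟨(n : ZMod p), 0, 0⟩ := by
  cases n with
  | ofNat m => simpa using pow_e1 m
  | negSucc m =>
    rw [zpow_negSucc, pow_e1]
    ext <;> simp [Heis.inv_def] <;> push_cast <;> ring

lemma pow_e2 (n : ℕ) : (⟨0,1,0⟩ : Heis p) ^ n = ⟨0, (n : ZMod p), 0⟩ := by
  induction n with
  | zero => simp [Heis.one_def]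
  | succ k ih => ext <;> simp [pow_succ, ih, Heis.mul_def] <;> push_cast <;> ring

lemma zpow_e2 (n : ℤ) : (⟨0,1,0⟩ : Heis p) ^ n = ⟨0, (n : ZMod p), 0⟩ := by
  cases n with
  | ofNat m => simpa using pow_e2 m
  | negSucc m =>
    rw [zpow_negSucc, pow_e2]
    ext <;> simp [Heis.inv_def] <;> push_cast <;> ring

lemma conj_eq (g h : Heis p) :
    g * h * g⁻¹ = ⟨h.x, h.y, h.z + g.x * h.y - g.y * h.x⟩ := by
  ext <;> simp [Heis.mul_def, Heis.inv_def] <;> ring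

end HeisAux

/-- For every odd prime `p`, the Baer subgroup of the Heisenberg group
`H_p`, i.e. the intersection `⋂_K N_{H_p}(K)` of the normalizers of all subgroups `K`
of `H_p`, equals `ζ(H_p)`. -/
theorem heisenberg_baer_subgroup (p : ℕ) (hp : p.Prime) (ho : Odd p) :
    (⨅ K : Subgroup (Heis p), Subgroup.normalizer (K : Set (Heis p))) = Zeta p := by
  apply le_antisymm
  · intro g hg
    simp only [Subgroup.mem_iInf] at hg
    constructor
    · -- use K = zpowers (0,1,0)
      have h2 := hg (Subgroup.zpowers (⟨0,1,0⟩ : Heis p))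
      rw [Subgroup.mem_normalizer_iff] at h2
      have := (h2 ⟨0,1,0⟩).mp (Subgroup.mem_zpowers _)
      rw [Subgroup.mem_zpowers_iff] at this
      obtain ⟨k, hk⟩ := this
      rw [HeisAux.zpow_e2, HeisAux.conj_eq] at hk
      have hz := congrArg Heis.z hk
      simpa using hz.symm
    · have h1 := hg (Subgroup.zpowers (⟨1,0,0⟩ : Heis p))
      rw [Subgroup.mem_normalizer_iff] at h1
      have := (h1 ⟨1,0,0⟩).mp (Subgroup.mem_zpowers _)
      rw [Subgroup.mem_zpowers_iff] at this
      obtain ⟨k, hk⟩ := this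
      rw [HeisAux.zpow_e1, HeisAux.conj_eq] at hk
      have hz := congrArg Heis.z hk
      simp at hz
      simpa using hz
  · intro g hg
    obtain ⟨hx, hy⟩ := hg
    simp only [Subgroup.mem_iInf]
    intro K
    rw [Subgroup.mem_normalizer_iff]
    intro h
    have : g * h * g⁻¹ = h := by
      rw [HeisAux.conj_eq, hx, hy]; ext <;> simp
    rw [this]
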